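/- Let d ≥ 1, T > 0 and N > 0. Then there exists u₀ ∈ L²(ℝ^d) such that the heat solution u(t,x) = (4πt)^{−d/2} ∫_{ℝ^d} e^{−|x−y|²/(4t)} u₀(y) dy satisfies u(T, n/N) = 0 for every n ∈ ℤ^d, while ‖u(T,·)‖_{L²(ℝ^d)} > 0. In particular, the inequality ∫_{ℝ^d} |u(T,x)|² dx ≤ N^{−d} Σ_{n ∈ ℤ^d} |u(T, n/N)|² fails for this initial datum. -/

import Mathlib

open Real MeasureTheory

/-- The solution of the heat equation on `ℝ^d` with initial datum `u₀`, given by convolution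
with the Gaussian heat kernel. -/
noncomputable def heatSolution (d : ℕ) (u₀ : EuclideanSpace ℝ (Fin d) → ℝ)
    (t : ℝ) (x : EuclideanSpace ℝ (Fin d)) : ℝ :=
  (4 * Real.pi * t) ^ (-(d : ℝ) / 2) * ∫ y, Real.exp (-‖x - y‖ ^ 2 / (4 * t)) * u₀ y

/-- One-dimensional Gaussian–sine convolution integral. -/
lemma heat_oneD {T : ℝ} (hT : 0 < T) (k c : ℝ) :
    ∫ s : ℝ, Real.exp (-(c - s)^2 / (4*T)) * (Real.exp (-s^2/(4*T)) * Real.sin (k*s))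
      = Real.sqrt (2*π*T) * (Real.exp (-c^2/(8*T) - k^2*T/2) * Real.sin (k*c/2)) := by
  have hT' : (T:ℝ) ≠ 0 := hT.ne'
  have hbre : (-(1/(2*T) : ℂ)).re < 0 := by
    simp only [Complex.neg_re, one_div, neg_neg, neg_lt_zero]
    rw [← Complex.ofReal_ofNat, ← Complex.ofReal_mul, ← Complex.ofReal_inv, Complex.ofReal_re]
    positivity
  set cc : ℂ := ((c/(2*T) : ℝ) : ℂ) + (k:ℂ)*Complex.I with hcc
  set dd : ℂ := ((-(c^2/(4*T)) : ℝ) : ℂ) with hdd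
  have hint : Integrable (fun s : ℝ => Complex.exp ((-(1/(2*T):ℂ)) * s^2 + cc*s + dd)) :=
    integrable_cexp_quadratic' hbre cc dd
  have h1 : ∀ s : ℝ, (Complex.exp ((-(1/(2*T):ℂ)) * s^2 + cc*s + dd)).im
      = Real.exp (-(c-s)^2 / (4*T)) * (Real.exp (-s^2/(4*T)) * Real.sin (k*s)) := by
    intro s
    have hz : (-(1/(2*T):ℂ)) * s^2 + cc*s + dd
        = ((-(c-s)^2/(4*T) + -s^2/(4*T) : ℝ) : ℂ) + ((k*s : ℝ) : ℂ)*Complex.I := by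
      have hTc : (T:ℂ) ≠ 0 := Complex.ofReal_ne_zero.2 hT'
      rw [hcc, hdd]; push_cast; field_simp; ring
    rw [hz, Complex.exp_im]
    simp only [Complex.add_re, Complex.add_im, Complex.mul_re, Complex.mul_im,
      Complex.ofReal_re, Complex.ofReal_im, Complex.I_re, Complex.I_im, mul_zero, zero_mul,
      mul_one, sub_zero, add_zero, zero_add]
    rw [Real.exp_add]
    ring
  have key := integral_cexp_quadratic hbre cc dd
  have h2 : ((↑π / -(-(1/(2*T):ℂ))) ^ (1/2 : ℂ) * Complex.exp (dd - cc^2/(4 * (-(1/(2*T):ℂ))))).im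
      = Real.sqrt (2*π*T) * (Real.exp (-c^2/(8*T) - k^2*T/2) * Real.sin (k*c/2)) := by
    have e1 : ((π:ℂ) / -(-(1/(2*T):ℂ))) = ((2*π*T : ℝ) : ℂ) := by
      push_cast; field_simp
    have e2 : dd - cc^2/(4 * (-(1/(2*T):ℂ)))
        = ((-c^2/(8*T) - k^2*T/2 : ℝ) : ℂ) + ((k*c/2 : ℝ) : ℂ)*Complex.I := by
      have hTc : (T:ℂ) ≠ 0 := Complex.ofReal_ne_zero.2 hT'
      rw [hcc, hdd]; push_cast; field_simp
      ring_nf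
      simp [Complex.I_sq]
      ring
    have e3 : ((2*π*T : ℝ) : ℂ) ^ (1/2 : ℂ) = ((Real.sqrt (2*π*T) : ℝ) : ℂ) := by
      rw [Real.sqrt_eq_rpow, Complex.ofReal_cpow (by positivity)]
      norm_num
    rw [e1, e2, e3]
    simp only [Complex.mul_im, Complex.ofReal_re, Complex.ofReal_im, zero_mul, add_zero]
    rw [Complex.exp_im]
    simp only [Complex.add_re, Complex.add_im, Complex.mul_re, Complex.mul_im,
      Complex.ofReal_re, Complex.ofReal_im, Complex.I_re, Complex.I_im, mul_zero, zero_mul,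
      mul_one, sub_zero, add_zero, zero_add]
  calc ∫ s : ℝ, Real.exp (-(c - s)^2 / (4*T)) * (Real.exp (-s^2/(4*T)) * Real.sin (k*s))
      = ∫ s : ℝ, (Complex.exp ((-(1/(2*T):ℂ)) * s^2 + cc*s + dd)).im := by
        congr 1; ext s; rw [h1]
    _ = (∫ s : ℝ, Complex.exp ((-(1/(2*T):ℂ)) * s^2 + cc*s + dd)).im := by
        simpa using (integral_im hint)
    _ = _ := by rw [key, h2]

/-- Closed form of the heat solution for the separable Gaussian–sine initial datum. -/
lemma heat_closed {d : ℕ} {T : ℝ} (hT : 0 < T) (k : ℝ) (x : EuclideanSpace ℝ (Fin d)) :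
    heatSolution d (fun y => ∏ i, (Real.exp (-(y i)^2/(4*T)) * Real.sin (k * y i))) T x
      = (4*π*T) ^ (-(d:ℝ)/2) *
        ∏ i, (Real.sqrt (2*π*T) * (Real.exp (-(x i)^2/(8*T) - k^2*T/2) * Real.sin (k * x i / 2))) := by
  rw [heatSolution]
  congr 1
  have hnorm : ∀ y : EuclideanSpace ℝ (Fin d), ‖x - y‖^2 = ∑ i, (x i - y i)^2 := by
    intro y
    rw [EuclideanSpace.norm_eq, Real.sq_sqrt (by positivity)]
    simp [sq_abs]
  have hpt : ∀ y : EuclideanSpace ℝ (Fin d),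
      Real.exp (-‖x - y‖^2 / (4*T)) * (∏ i, (Real.exp (-(y i)^2/(4*T)) * Real.sin (k * y i)))
        = ∏ i, (Real.exp (-(x i - y i)^2 / (4*T)) * (Real.exp (-(y i)^2/(4*T)) * Real.sin (k * y i))) := by
    intro y
    rw [hnorm]
    have h' : (-(∑ i, (x i - y i)^2)) / (4*T) = ∑ i, (-(x i - y i)^2 / (4*T)) := by
      rw [neg_div, Finset.sum_div, ← Finset.sum_neg_distrib]
      simp [neg_div]
    rw [h', Real.exp_sum, ← Finset.prod_mul_distrib]
  simp_rw [hpt]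
  rw [← ((EuclideanSpace.volume_preserving_symm_measurableEquiv_toLp (Fin d)).symm).integral_comp'
    (fun y : EuclideanSpace ℝ (Fin d) =>
      ∏ i, (Real.exp (-(x i - y i)^2 / (4*T)) * (Real.exp (-(y i)^2/(4*T)) * Real.sin (k * y i))))]
  have : ∀ z : Fin d → ℝ,
      (∏ i, (Real.exp (-(x i - ((MeasurableEquiv.toLp 2 (Fin d → ℝ)).symm.symm z) i)^2 / (4*T)) *
        (Real.exp (-(((MeasurableEquiv.toLp 2 (Fin d → ℝ)).symm.symm z) i)^2/(4*T)) *
          Real.sin (k * ((MeasurableEquiv.toLp 2 (Fin d → ℝ)).symm.symm z) i))))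
      = ∏ i, (Real.exp (-(x i - z i)^2 / (4*T)) * (Real.exp (-(z i)^2/(4*T)) * Real.sin (k * z i))) := by
    intro z; rfl
  simp_rw [this]
  rw [MeasureTheory.integral_fintype_prod_volume_eq_prod (ι := Fin d)
    (f := fun i (s : ℝ) => Real.exp (-(x i - s)^2 / (4*T)) * (Real.exp (-s^2/(4*T)) * Real.sin (k*s)))]
  exact Finset.prod_congr rfl fun i _ => heat_oneD hT k (x i)

lemma heat_gauss_integrable {d : ℕ} {b : ℝ} (hb : 0 < b) :
    Integrable (fun v : EuclideanSpace ℝ (Fin d) => Real.exp (-b * ‖v‖^2)) := by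
  have h := (GaussianFourier.integrable_cexp_neg_mul_sq_norm_add
    (V := EuclideanSpace ℝ (Fin d)) (b := (b:ℂ)) (by simpa using hb) 0 0).re
  refine h.congr (Filter.Eventually.of_forall fun v => ?_)
  have : (-(b:ℂ) * ‖v‖^2 + 0 * (inner ℝ (0 : EuclideanSpace ℝ (Fin d)) v : ℝ))
      = ((-b * ‖v‖^2 : ℝ) : ℂ) := by push_cast; ring
  show (Complex.exp (-(b:ℂ) * ‖v‖^2 + 0 * (inner ℝ (0 : EuclideanSpace ℝ (Fin d)) v : ℝ))).re = _
  rw [this, ← Complex.ofReal_exp, Complex.ofReal_re]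

/-- For every `T > 0` and `N > 0` there is an initial datum `u₀ ∈ L²(ℝ^d)` whose
heat solution vanishes at every point of the scaled lattice `ℤ^d / N` at time `T` while having
positive `L²` norm at time `T`; in particular the observability inequality
`∫ |u(T,x)|² dx ≤ N^{-d} ∑_{n ∈ ℤ^d} |u(T,n/N)|²` fails for this datum. -/
theorem heat_lattice_observability_fails
    (d : ℕ) (hd : 1 ≤ d) (T N : ℝ) (hT : 0 < T) (hN : 0 < N) :
    ∃ u₀ : EuclideanSpace ℝ (Fin d) → ℝ,
      MemLp u₀ 2 (volume : Measure (EuclideanSpace ℝ (Fin d))) ∧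
      (∀ n : Fin d → ℤ,
        heatSolution d u₀ T (show EuclideanSpace ℝ (Fin d) from WithLp.toLp 2 fun i => (n i : ℝ) / N) = 0) ∧
      0 < ∫ x, |heatSolution d u₀ T x| ^ 2 ∧
      ¬ ((∫ x, |heatSolution d u₀ T x| ^ 2) ≤
          N ^ (-(d : ℤ)) *
            ∑' n : Fin d → ℤ,
              |heatSolution d u₀ T (show EuclideanSpace ℝ (Fin d) from WithLp.toLp 2 fun i => (n i : ℝ) / N)| ^ 2) := by
  set k : ℝ := 2*π*N with hk
  have hk0 : 0 < k := by rw [hk]; positivity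
  have hT' : (T:ℝ) ≠ 0 := hT.ne'
  set u₀ : EuclideanSpace ℝ (Fin d) → ℝ :=
    fun y => ∏ i, (Real.exp (-(y i)^2/(4*T)) * Real.sin (k * y i)) with hu₀
  have hG : ∀ x : EuclideanSpace ℝ (Fin d), heatSolution d u₀ T x
      = (4*π*T) ^ (-(d:ℝ)/2) *
        ∏ i, (Real.sqrt (2*π*T) * (Real.exp (-(x i)^2/(8*T) - k^2*T/2) * Real.sin (k * x i / 2))) :=
    fun x => heat_closed hT k x
  have hci : ∀ i : Fin d, Continuous fun y : EuclideanSpace ℝ (Fin d) => y i :=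
    fun i => (EuclideanSpace.proj (𝕜 := ℝ) i).continuous
  have hx2 : ∀ x : EuclideanSpace ℝ (Fin d), ‖x‖^2 = ∑ i, (x i)^2 := by
    intro x
    rw [EuclideanSpace.norm_eq, Real.sq_sqrt (by positivity)]
    simp [sq_abs]
  -- (1) Memℒp
  have hcont : Continuous u₀ := by
    rw [hu₀]
    exact continuous_finset_prod _ fun i _ =>
      ((Real.continuous_exp.comp (by continuity)).mul
        (Real.continuous_sin.comp (continuous_const.mul (hci i))))
  have hmem : MemLp u₀ 2 (volume : Measure (EuclideanSpace ℝ (Fin d))) := by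
    rw [memLp_two_iff_integrable_sq hcont.aestronglyMeasurable]
    refine (heat_gauss_integrable (d := d) (b := 1/(2*T)) (by positivity)).mono'
      ((hcont.pow 2).aestronglyMeasurable) (Filter.Eventually.of_forall fun x => ?_)
    have hb : ∀ i : Fin d, (Real.exp (-(x i)^2/(4*T)) * Real.sin (k * x i))^2
        ≤ Real.exp (-(1/(2*T)) * (x i)^2) := by
      intro i
      have h1 : Real.sin (k * x i)^2 ≤ 1 := Real.sin_sq_le_one _
      have h2 : Real.exp (-(x i)^2/(4*T))^2 = Real.exp (-(1/(2*T)) * (x i)^2) := by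
        rw [sq, ← Real.exp_add]
        congr 1
        field_simp
        ring
      calc (Real.exp (-(x i)^2/(4*T)) * Real.sin (k * x i))^2
          = Real.exp (-(x i)^2/(4*T))^2 * Real.sin (k * x i)^2 := by ring
        _ ≤ Real.exp (-(x i)^2/(4*T))^2 * 1 :=
            mul_le_mul_of_nonneg_left h1 (sq_nonneg _)
        _ = Real.exp (-(1/(2*T)) * (x i)^2) := by rw [mul_one, h2]
    have : u₀ x ^ 2 ≤ Real.exp (-(1/(2*T)) * ‖x‖^2) := by
      rw [hu₀]
      calc (∏ i, (Real.exp (-(x i)^2/(4*T)) * Real.sin (k * x i)))^2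
          = ∏ i, (Real.exp (-(x i)^2/(4*T)) * Real.sin (k * x i))^2 := by
            rw [← Finset.prod_pow]
        _ ≤ ∏ i, Real.exp (-(1/(2*T)) * (x i)^2) :=
            Finset.prod_le_prod (fun i _ => sq_nonneg _) (fun i _ => hb i)
        _ = Real.exp (-(1/(2*T)) * ‖x‖^2) := by
            rw [← Real.exp_sum, hx2, Finset.mul_sum]
    calc ‖u₀ x ^ 2‖ = u₀ x ^ 2 := by rw [Real.norm_eq_abs, abs_of_nonneg (sq_nonneg _)]
      _ ≤ Real.exp (-(1/(2*T)) * ‖x‖^2) := this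
  -- (2) lattice vanishing
  have hlat : ∀ n : Fin d → ℤ,
      heatSolution d u₀ T (show EuclideanSpace ℝ (Fin d) from WithLp.toLp 2 fun i => (n i : ℝ) / N) = 0 := by
    intro n
    rw [hG]
    apply mul_eq_zero_of_right
    apply Finset.prod_eq_zero (Finset.mem_univ (⟨0, hd⟩ : Fin d))
    have hco : (show EuclideanSpace ℝ (Fin d) from WithLp.toLp 2 fun i => (n i : ℝ) / N) (⟨0, hd⟩ : Fin d)
        = (n ⟨0, hd⟩ : ℝ) / N := rfl
    rw [hco]
    have : k * ((n ⟨0, hd⟩ : ℝ) / N) / 2 = (n ⟨0, hd⟩ : ℝ) * π := by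
      rw [hk]; field_simp
    rw [this, Real.sin_int_mul_pi, mul_zero, mul_zero]
  -- (3) positivity
  set F : EuclideanSpace ℝ (Fin d) → ℝ := fun x =>
    (4*π*T) ^ (-(d:ℝ)/2) *
      ∏ i, (Real.sqrt (2*π*T) * (Real.exp (-(x i)^2/(8*T) - k^2*T/2) * Real.sin (k * x i / 2)))
    with hF
  have hFcont : Continuous F := by
    rw [hF]
    apply continuous_const.mul
    exact continuous_finset_prod _ fun i _ =>
      continuous_const.mul
        ((Real.continuous_exp.comp
          ((((hci i).pow 2).neg.div_const (8*T)).sub continuous_const)).mul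
        (Real.continuous_sin.comp ((continuous_const.mul (hci i)).div_const 2)))
  have hfac : ∀ (x : EuclideanSpace ℝ (Fin d)) (i : Fin d),
      (Real.sqrt (2*π*T) * (Real.exp (-(x i)^2/(8*T) - k^2*T/2) * Real.sin (k * x i / 2)))^2
        ≤ (2*π*T) * Real.exp (-(1/(4*T)) * (x i)^2) := by
    intro x i
    have h1 : Real.sin (k * x i / 2)^2 ≤ 1 := Real.sin_sq_le_one _
    have h2 : Real.exp (-(x i)^2/(8*T) - k^2*T/2)^2 ≤ Real.exp (-(1/(4*T)) * (x i)^2) := by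
      rw [sq, ← Real.exp_add]
      apply Real.exp_le_exp.2
      have hkT : 0 ≤ k^2*T := by positivity
      have h3 : -(x i)^2/(8*T) + -(x i)^2/(8*T) = -(1/(4*T)) * (x i)^2 := by
        field_simp
        ring
      nlinarith
    have hs : Real.sqrt (2*π*T)^2 = 2*π*T := Real.sq_sqrt (by positivity)
    calc (Real.sqrt (2*π*T) * (Real.exp (-(x i)^2/(8*T) - k^2*T/2) * Real.sin (k * x i / 2)))^2
        = Real.sqrt (2*π*T)^2 * Real.exp (-(x i)^2/(8*T) - k^2*T/2)^2 * Real.sin (k * x i / 2)^2 := by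
          ring
      _ ≤ Real.sqrt (2*π*T)^2 * Real.exp (-(x i)^2/(8*T) - k^2*T/2)^2 * 1 :=
          mul_le_mul_of_nonneg_left h1 (by positivity)
      _ = Real.sqrt (2*π*T)^2 * Real.exp (-(x i)^2/(8*T) - k^2*T/2)^2 := mul_one _
      _ ≤ Real.sqrt (2*π*T)^2 * Real.exp (-(1/(4*T)) * (x i)^2) :=
          mul_le_mul_of_nonneg_left h2 (sq_nonneg _)
      _ = (2*π*T) * Real.exp (-(1/(4*T)) * (x i)^2) := by rw [hs]
  have hFint : Integrable (fun x : EuclideanSpace ℝ (Fin d) => |F x|^2) := by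
    refine ((heat_gauss_integrable (d := d) (b := 1/(4*T)) (by positivity)).const_mul
      (((4*π*T) ^ (-(d:ℝ)/2))^2 * (2*π*T)^d)).mono'
      (((hFcont.abs).pow 2).aestronglyMeasurable) (Filter.Eventually.of_forall fun x => ?_)
    have hbd : |F x|^2 ≤ ((4*π*T) ^ (-(d:ℝ)/2))^2 * (2*π*T)^d * Real.exp (-(1/(4*T)) * ‖x‖^2) := by
      rw [sq_abs, hF]
      calc ((4*π*T) ^ (-(d:ℝ)/2) *
          ∏ i, (Real.sqrt (2*π*T) * (Real.exp (-(x i)^2/(8*T) - k^2*T/2) * Real.sin (k * x i / 2))))^2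
          = ((4*π*T) ^ (-(d:ℝ)/2))^2 *
            ∏ i, (Real.sqrt (2*π*T) * (Real.exp (-(x i)^2/(8*T) - k^2*T/2) * Real.sin (k * x i / 2)))^2 := by
            rw [mul_pow, ← Finset.prod_pow]
        _ ≤ ((4*π*T) ^ (-(d:ℝ)/2))^2 * ∏ i, ((2*π*T) * Real.exp (-(1/(4*T)) * (x i)^2)) :=
            mul_le_mul_of_nonneg_left
              (Finset.prod_le_prod (fun i _ => sq_nonneg _) (fun i _ => hfac x i))
              (sq_nonneg _)
        _ = ((4*π*T) ^ (-(d:ℝ)/2))^2 * (2*π*T)^d * Real.exp (-(1/(4*T)) * ‖x‖^2) := by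
            have hsum : (-(1/(4*T)) * ‖x‖^2) = ∑ i, -(1/(4*T)) * (x i)^2 := by
              rw [hx2, Finset.mul_sum]
            rw [Finset.prod_mul_distrib, Finset.prod_const, hsum, Real.exp_sum,
              Finset.card_univ, Fintype.card_fin, mul_assoc]
            ring
    calc ‖|F x|^2‖ = |F x|^2 := by rw [Real.norm_eq_abs, abs_of_nonneg (by positivity)]
      _ ≤ _ := hbd
  have hx0pos : 0 < F (show EuclideanSpace ℝ (Fin d) from WithLp.toLp 2 fun _ => π/k) := by
    have harg : k * (π/k) / 2 = π/2 := by field_simp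
    show 0 < (4*π*T) ^ (-(d:ℝ)/2) *
      ∏ i : Fin d, (Real.sqrt (2*π*T) * (Real.exp (-(π/k)^2/(8*T) - k^2*T/2) * Real.sin (k * (π/k) / 2)))
    rw [harg, Real.sin_pi_div_two]
    exact mul_pos (Real.rpow_pos_of_pos (by positivity) _)
      (Finset.prod_pos fun i _ => by positivity)
  have hpos : 0 < ∫ x, |heatSolution d u₀ T x| ^ 2 := by
    have hgoal : (∫ x, |heatSolution d u₀ T x| ^ 2) = ∫ x, |F x| ^ 2 := by
      congr 1; ext x; rw [hG x, hF]
    rw [hgoal]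
    refine (integral_pos_iff_support_of_nonneg (fun x => by positivity) hFint).mpr ?_
    have hopen : IsOpen (F ⁻¹' {(0:ℝ)}ᶜ) := isOpen_compl_singleton.preimage hFcont
    have hne : (F ⁻¹' {(0:ℝ)}ᶜ).Nonempty :=
      ⟨_, by simp only [Set.mem_preimage, Set.mem_compl_iff, Set.mem_singleton_iff]
             exact ne_of_gt hx0pos⟩
    refine lt_of_lt_of_le (hopen.measure_pos volume hne) (measure_mono fun x hx => ?_)
    simp only [Set.mem_preimage, Set.mem_compl_iff, Set.mem_singleton_iff] at hx
    simp only [Function.mem_support]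
    exact pow_ne_zero 2 (abs_ne_zero.2 hx)
  refine ⟨u₀, hmem, hlat, hpos, ?_⟩
  intro hle
  have ht : (∑' n : Fin d → ℤ,
      |heatSolution d u₀ T (show EuclideanSpace ℝ (Fin d) from WithLp.toLp 2 fun i => (n i : ℝ) / N)| ^ 2) = 0 := by
    have hz : ∀ n : Fin d → ℤ,
        |heatSolution d u₀ T (show EuclideanSpace ℝ (Fin d) from WithLp.toLp 2 fun i => (n i : ℝ) / N)| ^ 2 = 0 :=
      fun n => by rw [hlat n]; simp
    rw [tsum_congr hz, tsum_zero]
  rw [ht, mul_zero] at hle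
  exact absurd hle (not_le.2 hpos)
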